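/- Let L, M, N be positive integers and let g_0, …, g_{L−1} ∈ ℓ²(ℤ²,ℍ) be real-valued. Then G(g,L,M,N) is a Parseval Gabor frame for ℓ²(ℤ²,ℍ) if and only if for every k ∈ {0,…,N−1}² and every p ∈ ℤ², ∑_{l=0}^{L−1} ∑_{n∈ℤ²} g_l(k−nN)·g_l(k+pM−nN) = (1/M²) if p = (0,0) and = 0 otherwise, where nN := (n₁N,n₂N) and pM := (p₁M,p₂M). -/

import Mathlib

noncomputable section

open scoped Real

/-- The real quaternions. -/
abbrev ℍ : Type := Quaternion ℝ

/-- `e_i θ = cos θ + (sin θ) i`. -/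
def eI (θ : ℝ) : ℍ := ⟨Real.cos θ, Real.sin θ, 0, 0⟩

/-- `e_j θ = cos θ + (sin θ) j`. -/
def eJ (θ : ℝ) : ℍ := ⟨Real.cos θ, 0, Real.sin θ, 0⟩

/-- Quaternionic pairing `⟨f,g⟩ = ∑ conj (f k) * g k`. -/
def qpair (f g : ℤ × ℤ → ℍ) : ℍ := ∑' k : ℤ × ℤ, star (f k) * g k

/-- Membership in `ℓ²(ℤ², ℍ)`. -/
def MemL2 (f : ℤ × ℤ → ℍ) : Prop := Summable fun k : ℤ × ℤ => ‖f k‖ ^ 2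

/-- `‖f‖² = ∑ |f k|²`. -/
def normSq2 (f : ℤ × ℤ → ℍ) : ℝ := ∑' k : ℤ × ℤ, ‖f k‖ ^ 2

/-- A window is real-valued if all its values lie in `ℝ ⊆ ℍ`. -/
def IsRealValued (f : ℤ × ℤ → ℍ) : Prop := ∀ k : ℤ × ℤ, f k = ((f k).re : ℍ)

/-- The Gabor atom `E_{m/M} T_{nN} w`. -/
def gaborAtom (M N : ℕ) (w : ℤ × ℤ → ℍ) (m : ℕ × ℕ) (n : ℤ × ℤ) : ℤ × ℤ → ℍ :=
  fun k =>
    eI (2 * π * (m.1 : ℝ) * (k.1 : ℝ) / (M : ℝ)) *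
      w (k.1 - n.1 * (N : ℤ), k.2 - n.2 * (N : ℤ)) *
      eJ (2 * π * (m.2 : ℝ) * (k.2 : ℝ) / (M : ℝ))

/-- The index square `{0, …, M-1}²`. -/
abbrev msq (M : ℕ) : Finset (ℕ × ℕ) := Finset.range M ×ˢ Finset.range M

/-- `k ∈ {0, …, N-1}²` inside `ℤ²`. -/
def InNsq (N : ℕ) (k : ℤ × ℤ) : Prop :=
  0 ≤ k.1 ∧ k.1 < (N : ℤ) ∧ 0 ≤ k.2 ∧ k.2 < (N : ℤ)

/-- `∑_{l<L} ∑_{n∈ℤ²} ∑_{m∈{0,…,M-1}²} |⟨E_{m/M}T_{nN}g_l, h⟩|²`. -/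
def frameSum (L M N : ℕ) (g : ℕ → ℤ × ℤ → ℍ) (h : ℤ × ℤ → ℍ) : ℝ :=
  ∑ l ∈ Finset.range L, ∑' n : ℤ × ℤ, ∑ m ∈ msq M,
    ‖qpair (gaborAtom M N (g l) m n) h‖ ^ 2

/-- Bessel system with bound `B`. -/
def IsBessel (L M N : ℕ) (g : ℕ → ℤ × ℤ → ℍ) (B : ℝ) : Prop :=
  ∀ h : ℤ × ℤ → ℍ, MemL2 h → frameSum L M N g h ≤ B * normSq2 h

/-- Frame with bounds `A ≤ B`. -/
def IsFrame (L M N : ℕ) (g : ℕ → ℤ × ℤ → ℍ) (A B : ℝ) : Prop :=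
  ∀ h : ℤ × ℤ → ℍ, MemL2 h →
    A * normSq2 h ≤ frameSum L M N g h ∧ frameSum L M N g h ≤ B * normSq2 h

/-- Parseval frame. -/
def IsParseval (L M N : ℕ) (g : ℕ → ℤ × ℤ → ℍ) : Prop :=
  ∀ h : ℤ × ℤ → ℍ, MemL2 h → frameSum L M N g h = normSq2 h

/-- Orthonormal system. -/
def IsON (L M N : ℕ) (g : ℕ → ℤ × ℤ → ℍ) : Prop :=
  ∀ l l' : ℕ, l < L → l' < L → ∀ m ∈ msq M, ∀ m' ∈ msq M, ∀ n n' : ℤ × ℤ,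
    qpair (gaborAtom M N (g l) m n) (gaborAtom M N (g l') m' n') =
      if l = l' ∧ m = m' ∧ n = n' then 1 else 0

/-- `G(k,p) = ∑_{l<L} ∑_{n∈ℤ²} g_l(k-nN) g_l(k+pM-nN)`. -/
def gaborG (L M N : ℕ) (g : ℕ → ℤ × ℤ → ℍ) (k p : ℤ × ℤ) : ℍ :=
  ∑ l ∈ Finset.range L, ∑' n : ℤ × ℤ,
    g l (k.1 - n.1 * (N : ℤ), k.2 - n.2 * (N : ℤ)) *
      g l (k.1 + p.1 * (M : ℤ) - n.1 * (N : ℤ), k.2 + p.2 * (M : ℤ) - n.2 * (N : ℤ))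

/-- Mixed version: `∑_{l<L} ∑_{n∈ℤ²} g_l(k-nN) h_l(k+pM-nN)`. -/
def gaborGmix (L M N : ℕ) (g h : ℕ → ℤ × ℤ → ℍ) (k p : ℤ × ℤ) : ℍ :=
  ∑ l ∈ Finset.range L, ∑' n : ℤ × ℤ,
    g l (k.1 - n.1 * (N : ℤ), k.2 - n.2 * (N : ℤ)) *
      h l (k.1 + p.1 * (M : ℤ) - n.1 * (N : ℤ), k.2 + p.2 * (M : ℤ) - n.2 * (N : ℤ))

/-- `∑_{l<L} ∑_{n∈ℤ²} |g_l(k-nN)|²`. -/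
def winSum (L N : ℕ) (g : ℕ → ℤ × ℤ → ℍ) (k : ℤ × ℤ) : ℝ :=
  ∑ l ∈ Finset.range L, ∑' n : ℤ × ℤ,
    ‖g l (k.1 - n.1 * (N : ℤ), k.2 - n.2 * (N : ℤ))‖ ^ 2

/-- Support of diameter `< M` in every row and every column. -/
def DiamLt (M : ℕ) (f : ℤ × ℤ → ℍ) : Prop :=
  (∀ k₂ k₁ k₁' : ℤ, f (k₁, k₂) ≠ 0 → f (k₁', k₂) ≠ 0 → |k₁ - k₁'| < (M : ℤ)) ∧
  (∀ k₁ k₂ k₂' : ℤ, f (k₁, k₂) ≠ 0 → f (k₁, k₂') ≠ 0 → |k₂ - k₂'| < (M : ℤ))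

/-- `M`-periodicity. -/
def MPeriodic (M : ℕ) (f : ℤ × ℤ → ℍ) : Prop :=
  ∀ k : ℤ × ℤ, f (k.1 + (M : ℤ), k.2) = f k ∧ f (k.1, k.2 + (M : ℤ)) = f k

/-- Duality of two Gabor systems (on finitely supported sequences). -/
def AreDual (L M N : ℕ) (g h : ℕ → ℤ × ℤ → ℍ) : Prop :=
  ∀ f φ : ℤ × ℤ → ℍ, (Function.support f).Finite → (Function.support φ).Finite →
    (∑ l ∈ Finset.range L, ∑' n : ℤ × ℤ, ∑ m ∈ msq M,
      qpair f (gaborAtom M N (g l) m n) * qpair (gaborAtom M N (h l) m n) φ)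
      = qpair f φ


/-! ### Auxiliary toolkit -/

section
open scoped Quaternion

/-- `ℂ → ℍ` sending `i` to `j`, as a ring hom. -/
def toJ : ℂ →+* ℍ where
  toFun z := (⟨z.re, 0, z.im, 0⟩ : ℍ)
  map_one' := by ext <;> simp
  map_mul' z w := by
    ext
    · erw [Quaternion.re_mul]; simp [Complex.mul_re, Complex.mul_im]
    · erw [Quaternion.imI_mul]; simp [Complex.mul_re, Complex.mul_im]
    · erw [Quaternion.imJ_mul]; simp [Complex.mul_re, Complex.mul_im]
    · erw [Quaternion.imK_mul]; simp [Complex.mul_re, Complex.mul_im]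
  map_zero' := by ext <;> simp
  map_add' z w := by
    ext
    · erw [Quaternion.re_add]; simp
    · erw [Quaternion.imI_add]; simp
    · erw [Quaternion.imJ_add]; simp
    · erw [Quaternion.imK_add]; simp

/-- ring hom `ℂ → ℍ` with `i ↦ i`. -/
def toI : ℂ →+* ℍ where
  toFun := Quaternion.coeComplex
  map_one' := Quaternion.coeComplex_one
  map_mul' := fun z w => (Quaternion.coeComplex_mul z w)
  map_zero' := Quaternion.coeComplex_zero
  map_add' := fun z w => (Quaternion.coeComplex_add z w)

lemma toJ_apply (z : ℂ) : toJ z = (⟨z.re, 0, z.im, 0⟩ : ℍ) := rfl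

lemma eI_eq (θ : ℝ) : eI θ = toI (Complex.exp (θ * Complex.I)) := by
  show _ = Quaternion.coeComplex _
  ext <;> simp [eI, Quaternion.coeComplex]

lemma eJ_eq (θ : ℝ) : eJ θ = toJ (Complex.exp (θ * Complex.I)) := by
  ext <;> simp [eJ, toJ_apply]

lemma eI_mul_eI (a b : ℝ) : eI a * eI b = eI (a + b) := by
  rw [eI_eq, eI_eq, eI_eq, ← map_mul, ← Complex.exp_add]
  push_cast
  ring_nf

lemma eJ_mul_eJ (a b : ℝ) : eJ a * eJ b = eJ (a + b) := by
  rw [eJ_eq, eJ_eq, eJ_eq, ← map_mul, ← Complex.exp_add]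
  push_cast
  ring_nf

@[simp] lemma eI_zero : eI 0 = 1 := by ext <;> simp [eI]
@[simp] lemma eJ_zero : eJ 0 = 1 := by ext <;> simp [eJ]

lemma star_eI (θ : ℝ) : star (eI θ) = eI (-θ) := by ext <;> simp only [Quaternion.re_star, Quaternion.imI_star, Quaternion.imJ_star, Quaternion.imK_star] <;> simp [eI]
lemma star_eJ (θ : ℝ) : star (eJ θ) = eJ (-θ) := by ext <;> simp only [Quaternion.re_star, Quaternion.imI_star, Quaternion.imJ_star, Quaternion.imK_star] <;> simp [eJ]

lemma re_mul_comm (a b : ℍ) : (a * b).re = (b * a).re := by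
  simp [Quaternion.re_mul]; ring

lemma coe_mul_re (r : ℝ) (x : ℍ) : (((r : ℝ) : ℍ) * x).re = r * x.re := by
  simp [Quaternion.re_mul]

lemma re_sum {α : Type*} (s : Finset α) (f : α → ℍ) :
    (∑ x ∈ s, f x).re = ∑ x ∈ s, (f x).re :=
  map_sum (QuaternionAlgebra.reₗ (-1 : ℝ) (0 : ℝ) (-1 : ℝ)) f s

lemma norm_sq_eq_re_mul_star (z : ℍ) : ‖z‖ ^ 2 = (z * star z).re := by
  rw [Quaternion.self_mul_star, Quaternion.re_coe, Quaternion.normSq_eq_norm_mul_self, pow_two]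

/-- sum over roots of unity, in ℂ -/
lemma csum (M : ℕ) (hM : 0 < M) (d : ℤ) :
    ∑ m ∈ Finset.range M, Complex.exp (2 * π * (m : ℝ) * (d : ℝ) / (M : ℝ) * Complex.I)
      = if (M : ℤ) ∣ d then (M : ℂ) else 0 := by
  have hM0 : (M : ℝ) ≠ 0 := Nat.cast_ne_zero.mpr hM.ne'
  have hM0c : (M : ℂ) ≠ 0 := Nat.cast_ne_zero.mpr hM.ne'
  by_cases hd : (M : ℤ) ∣ d
  · obtain ⟨e, rfl⟩ := hd
    rw [if_pos (show (M:ℤ) ∣ (M:ℤ)*e from ⟨e, rfl⟩)]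
    have : ∀ m ∈ Finset.range M,
        Complex.exp (2 * π * (m : ℝ) * (((M : ℤ) * e : ℤ) : ℝ) / (M : ℝ) * Complex.I) = 1 := by
      intro m _
      have h2 : ((2 * π * (m : ℝ) * (((M : ℤ) * e : ℤ) : ℝ) / (M : ℝ) : ℝ) : ℂ) * Complex.I
          = ((m : ℤ) * e : ℤ) * (2 * (π : ℂ) * Complex.I) := by
        push_cast
        field_simp
      calc Complex.exp (2 * π * (m : ℝ) * (((M : ℤ) * e : ℤ) : ℝ) / (M : ℝ) * Complex.I)
          = Complex.exp (((2 * π * (m : ℝ) * (((M : ℤ) * e : ℤ) : ℝ) / (M : ℝ) : ℝ) : ℂ)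
              * Complex.I) := by push_cast; ring_nf
        _ = 1 := by rw [h2, Complex.exp_int_mul_two_pi_mul_I]
    rw [Finset.sum_congr rfl this]
    simp
  · rw [if_neg hd]
    have hterm : ∀ m ∈ Finset.range M,
        Complex.exp (2 * π * (m : ℝ) * (d : ℝ) / (M : ℝ) * Complex.I)
          = Complex.exp (2 * π * (d : ℝ) / (M : ℝ) * Complex.I) ^ m := by
      intro m _
      rw [← Complex.exp_nat_mul]
      congr 1
      push_cast
      ring
    rw [Finset.sum_congr rfl hterm]
    set ζ : ℂ := Complex.exp (2 * π * (d : ℝ) / (M : ℝ) * Complex.I) with hζdef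
    have hζM : ζ ^ M = 1 := by
      rw [hζdef, ← Complex.exp_nat_mul]
      have h3 : (M : ℂ) * (2 * (π : ℂ) * (d : ℂ) / (M : ℂ) * Complex.I)
          = (d : ℤ) * (2 * (π : ℂ) * Complex.I) := by
        push_cast
        field_simp
      calc Complex.exp ((M : ℂ) * (2 * ↑π * ↑(d : ℝ) / ↑(M : ℝ) * Complex.I))
          = Complex.exp ((d : ℤ) * (2 * (π : ℂ) * Complex.I)) := by
            rw [← h3]; push_cast; ring_nf
        _ = 1 := Complex.exp_int_mul_two_pi_mul_I d
    have hζ1 : ζ ≠ 1 := by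
      intro h1
      rw [hζdef, Complex.exp_eq_one_iff] at h1
      obtain ⟨n, hn⟩ := h1
      have h4 : ((2 * π * (d : ℝ) / (M : ℝ) : ℝ) : ℂ) * Complex.I
          = ((2 * π * (n : ℝ) : ℝ) : ℂ) * Complex.I := by
        push_cast at hn ⊢
        linear_combination hn
      have h5 : (2 * π * (d : ℝ) / (M : ℝ) : ℝ) = 2 * π * (n : ℝ) := by
        have := mul_right_cancel₀ Complex.I_ne_zero h4
        exact_mod_cast this
      have h6 : (d : ℝ) = (n : ℝ) * (M : ℝ) := by
        field_simp at h5
        nlinarith [Real.pi_pos, h5]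
      have h7 : d = n * M := by exact_mod_cast h6
      exact hd ⟨n, by rw [h7]; ring⟩
    rw [geom_sum_eq hζ1, hζM]
    simp

lemma geoI (M : ℕ) (hM : 0 < M) (d : ℤ) :
    ∑ m ∈ Finset.range M, eI (2 * π * (m : ℝ) * (d : ℝ) / (M : ℝ))
      = if (M : ℤ) ∣ d then (((M : ℝ) : ℍ)) else 0 := by
  have hc : ∀ m ∈ Finset.range M, eI (2 * π * (m : ℝ) * (d : ℝ) / (M : ℝ))
      = toI (Complex.exp (2 * π * (m : ℝ) * (d : ℝ) / (M : ℝ) * Complex.I)) := by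
    intro m _
    rw [eI_eq]
    show Quaternion.coeComplex _ = Quaternion.coeComplex _
    congr 1
    push_cast
    ring_nf
  rw [Finset.sum_congr rfl hc, ← map_sum, csum M hM d]
  split_ifs
  · show Quaternion.coeComplex _ = _
    ext <;> simp
  · exact map_zero toI

lemma geoJ (M : ℕ) (hM : 0 < M) (d : ℤ) :
    ∑ m ∈ Finset.range M, eJ (2 * π * (m : ℝ) * (d : ℝ) / (M : ℝ))
      = if (M : ℤ) ∣ d then (((M : ℝ) : ℍ)) else 0 := by
  have hc : ∀ m ∈ Finset.range M, eJ (2 * π * (m : ℝ) * (d : ℝ) / (M : ℝ))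
      = toJ (Complex.exp (2 * π * (m : ℝ) * (d : ℝ) / (M : ℝ) * Complex.I)) := by
    intro m _
    rw [eJ_eq]
    show toJ _ = toJ _
    congr 1
    push_cast
    ring_nf
  rw [Finset.sum_congr rfl hc, ← map_sum, csum M hM d]
  split_ifs
  · rw [toJ_apply]
    ext <;> simp
  · exact map_zero toJ

/-- The unit quaternion factor of a Gabor atom term. -/
def mu (M : ℕ) (m : ℕ × ℕ) (k : ℤ × ℤ) : ℍ :=
  eJ (-(2 * π * (m.2 : ℝ) * (k.2 : ℝ) / (M : ℝ))) * eI (-(2 * π * (m.1 : ℝ) * (k.1 : ℝ) / (M : ℝ)))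

lemma musum (M : ℕ) (hM : 0 < M) (k k' : ℤ × ℤ) :
    ∑ m ∈ msq M, star (mu M m k') * mu M m k
      = if ((M : ℤ) ∣ (k'.1 - k.1) ∧ (M : ℤ) ∣ (k'.2 - k.2))
        then (((M : ℝ) ^ 2 : ℝ) : ℍ) else 0 := by
  have hterm : ∀ m ∈ msq M, star (mu M m k') * mu M m k
      = eI (2 * π * (m.1 : ℝ) * (k'.1 : ℝ) / (M : ℝ))
          * eJ (2 * π * (m.2 : ℝ) * ((k'.2 - k.2 : ℤ) : ℝ) / (M : ℝ))
          * eI (-(2 * π * (m.1 : ℝ) * (k.1 : ℝ) / (M : ℝ))) := by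
    intro m _
    rw [mu, mu, star_mul, star_eI, star_eJ, neg_neg, neg_neg]
    rw [mul_assoc (eI _), ← mul_assoc (eJ _), eJ_mul_eJ]
    rw [← mul_assoc]
    congr 2
    push_cast
    ring
  rw [Finset.sum_congr rfl hterm]
  rw [Finset.sum_product]
  have hinner : ∀ m1 ∈ Finset.range M,
      (∑ m2 ∈ Finset.range M,
        eI (2 * π * (m1 : ℝ) * (k'.1 : ℝ) / (M : ℝ))
          * eJ (2 * π * (m2 : ℝ) * ((k'.2 - k.2 : ℤ) : ℝ) / (M : ℝ))
          * eI (-(2 * π * (m1 : ℝ) * (k.1 : ℝ) / (M : ℝ))))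
      = (if (M : ℤ) ∣ (k'.2 - k.2) then ((M : ℝ) : ℍ) else 0)
          * eI (2 * π * (m1 : ℝ) * ((k'.1 - k.1 : ℤ) : ℝ) / (M : ℝ)) := by
    intro m1 _
    have : (∑ m2 ∈ Finset.range M,
        eI (2 * π * (m1 : ℝ) * (k'.1 : ℝ) / (M : ℝ))
          * eJ (2 * π * (m2 : ℝ) * ((k'.2 - k.2 : ℤ) : ℝ) / (M : ℝ))
          * eI (-(2 * π * (m1 : ℝ) * (k.1 : ℝ) / (M : ℝ))))
        = eI (2 * π * (m1 : ℝ) * (k'.1 : ℝ) / (M : ℝ))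
          * (∑ m2 ∈ Finset.range M, eJ (2 * π * (m2 : ℝ) * ((k'.2 - k.2 : ℤ) : ℝ) / (M : ℝ)))
          * eI (-(2 * π * (m1 : ℝ) * (k.1 : ℝ) / (M : ℝ))) := by
      rw [Finset.mul_sum, Finset.sum_mul]
    rw [this, geoJ M hM (k'.2 - k.2)]
    by_cases hd : (M : ℤ) ∣ (k'.2 - k.2)
    · rw [if_pos hd, Quaternion.mul_coe_eq_smul, smul_mul_assoc, eI_mul_eI,
        Quaternion.coe_mul_eq_smul]
      congr 2
      push_cast
      ring
    · rw [if_neg hd]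
      simp
  rw [Finset.sum_congr rfl hinner, ← Finset.mul_sum, geoI M hM (k'.1 - k.1)]
  by_cases h1 : (M : ℤ) ∣ (k'.1 - k.1) <;> by_cases h2 : (M : ℤ) ∣ (k'.2 - k.2) <;>
    simp [h1, h2, ← Quaternion.coe_mul, pow_two]


lemma term_re_rearrange (μ μ' c c' : ℍ) :
    ((μ * c) * star (μ' * c')).re = ((star μ' * μ) * (c * star c')).re := by
  rw [star_mul]
  have h1 : (μ * c) * (star c' * star μ') = ((μ * (c * star c')) * star μ') := by
    simp [mul_assoc]
  rw [h1, re_mul_comm, ← mul_assoc]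

lemma Yre (a b : ℝ) (x y : ℍ) :
    (((a : ℍ) * x) * star ((b : ℍ) * y)).re = a * b * (x * star y).re := by
  rw [star_mul, Quaternion.star_coe]
  have h1 : ((a : ℍ) * x) * (star y * (b : ℍ)) = (a : ℍ) * ((x * star y) * (b : ℍ)) := by
    simp [mul_assoc]
  rw [h1, coe_mul_re, re_mul_comm, coe_mul_re]
  ring

lemma star_atom_mul (M N : ℕ) (gl : ℤ × ℤ → ℍ) (hgl : IsRealValued gl)
    (m : ℕ × ℕ) (n k : ℤ × ℤ) (x : ℍ) :
    star (gaborAtom M N gl m n k) * x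
      = mu M m k * ((((gl (k.1 - n.1 * (N : ℤ), k.2 - n.2 * (N : ℤ))).re : ℝ) : ℍ) * x) := by
  rw [gaborAtom, hgl (k.1 - n.1 * (N : ℤ), k.2 - n.2 * (N : ℤ))]
  rw [star_mul, star_mul, star_eI, star_eJ, Quaternion.star_coe, mu]
  rw [mul_assoc (eJ _), Quaternion.coe_commutes]
  simp [mul_assoc]

lemma key (M N : ℕ) (hM : 0 < M) (gl : ℤ × ℤ → ℍ) (hgl : IsRealValued gl)
    (h : ℤ × ℤ → ℍ) (S : Finset (ℤ × ℤ)) (hS : ∀ k ∉ S, h k = 0) (n : ℤ × ℤ) :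
    ∑ m ∈ msq M, ‖qpair (gaborAtom M N gl m n) h‖ ^ 2
      = (M : ℝ) ^ 2 * ∑ k ∈ S, ∑ k' ∈ S,
          (if (M : ℤ) ∣ (k'.1 - k.1) ∧ (M : ℤ) ∣ (k'.2 - k.2)
           then ((gl (k.1 - n.1 * (N : ℤ), k.2 - n.2 * (N : ℤ))).re
                  * (gl (k'.1 - n.1 * (N : ℤ), k'.2 - n.2 * (N : ℤ))).re)
                * (h k * star (h k')).re
           else 0) := by
  set c : ℤ × ℤ → ℍ :=
    fun k => (((gl (k.1 - n.1 * (N : ℤ), k.2 - n.2 * (N : ℤ))).re : ℝ) : ℍ) * h k with hc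
  have hq : ∀ m : ℕ × ℕ, qpair (gaborAtom M N gl m n) h = ∑ k ∈ S, mu M m k * c k := by
    intro m
    rw [qpair]
    rw [tsum_eq_sum (s := S) (fun k hk => by rw [hS k hk, mul_zero])]
    exact Finset.sum_congr rfl fun k _ => star_atom_mul M N gl hgl m n k (h k)
  have hstep : ∀ m : ℕ × ℕ, ‖qpair (gaborAtom M N gl m n) h‖ ^ 2
      = ∑ k ∈ S, ∑ k' ∈ S, ((star (mu M m k') * mu M m k) * (c k * star (c k'))).re := by
    intro m
    rw [hq m, norm_sq_eq_re_mul_star, star_sum, Finset.sum_mul_sum, re_sum]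
    refine Finset.sum_congr rfl fun k _ => ?_
    rw [re_sum]
    exact Finset.sum_congr rfl fun k' _ => term_re_rearrange _ _ _ _
  rw [Finset.sum_congr rfl fun m _ => hstep m]
  rw [Finset.sum_comm]
  rw [Finset.mul_sum]
  refine Finset.sum_congr rfl fun k _ => ?_
  rw [Finset.sum_comm, Finset.mul_sum]
  refine Finset.sum_congr rfl fun k' _ => ?_
  rw [← re_sum, ← Finset.sum_mul, musum M hM k k']
  by_cases hd : (M : ℤ) ∣ (k'.1 - k.1) ∧ (M : ℤ) ∣ (k'.2 - k.2)
  · rw [if_pos hd, if_pos hd, coe_mul_re, hc]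
    simp only []
    rw [Yre]
  · rw [if_neg hd, if_neg hd, zero_mul, Quaternion.re_zero, mul_zero]


lemma inj_shift (N : ℕ) (hN : 0 < N) (k : ℤ × ℤ) :
    Function.Injective (fun n : ℤ × ℤ => (k.1 - n.1 * (N : ℤ), k.2 - n.2 * (N : ℤ))) := by
  intro a b hab
  rw [Prod.ext_iff] at hab
  obtain ⟨h1, h2⟩ := hab
  simp only [] at h1 h2
  have hN0 : (N : ℤ) ≠ 0 := by exact_mod_cast hN.ne'
  have e1 : a.1 = b.1 := by
    have := sub_right_injective h1
    exact mul_right_cancel₀ hN0 this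
  have e2 : a.2 = b.2 := by
    have := sub_right_injective h2
    exact mul_right_cancel₀ hN0 this
  exact Prod.ext e1 e2

lemma norm_sq_eq_re_sq (gl : ℤ × ℤ → ℍ) (hgl : IsRealValued gl) (j : ℤ × ℤ) :
    ‖gl j‖ ^ 2 = (gl j).re ^ 2 := by
  rw [hgl j]
  rw [Quaternion.norm_coe, Real.norm_eq_abs, sq_abs]
  simp

lemma sq_re_summable (N : ℕ) (hN : 0 < N) (gl : ℤ × ℤ → ℍ) (hmem : MemL2 gl)
    (hgl : IsRealValued gl) (k : ℤ × ℤ) :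
    Summable (fun n : ℤ × ℤ => (gl (k.1 - n.1 * (N : ℤ), k.2 - n.2 * (N : ℤ))).re ^ 2) := by
  have h1 : Summable (fun j : ℤ × ℤ => (gl j).re ^ 2) :=
    (summable_congr (fun j => norm_sq_eq_re_sq gl hgl j)).mp hmem
  exact h1.comp_injective (inj_shift N hN k)

lemma abs_mul_le_half (a b : ℝ) : ‖a * b‖ ≤ (1 / 2) * (a ^ 2 + b ^ 2) := by
  rw [Real.norm_eq_abs, abs_mul]
  nlinarith [sq_nonneg (|a| - |b|), sq_abs a, sq_abs b, abs_nonneg a, abs_nonneg b]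

lemma prod_summable (N : ℕ) (hN : 0 < N) (gl : ℤ × ℤ → ℍ) (hmem : MemL2 gl)
    (hgl : IsRealValued gl) (k k' : ℤ × ℤ) :
    Summable (fun n : ℤ × ℤ =>
      (gl (k.1 - n.1 * (N : ℤ), k.2 - n.2 * (N : ℤ))).re
        * (gl (k'.1 - n.1 * (N : ℤ), k'.2 - n.2 * (N : ℤ))).re) := by
  have hb := ((sq_re_summable N hN gl hmem hgl k).add
    (sq_re_summable N hN gl hmem hgl k')).mul_left (1 / 2)
  exact Summable.of_norm_bounded hb (fun n => abs_mul_le_half _ _)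

/-- the central correlation function, real version -/
def Gr (L N : ℕ) (g : ℕ → ℤ × ℤ → ℍ) (k k' : ℤ × ℤ) : ℝ :=
  ∑ l ∈ Finset.range L, ∑' n : ℤ × ℤ,
    (g l (k.1 - n.1 * (N : ℤ), k.2 - n.2 * (N : ℤ))).re
      * (g l (k'.1 - n.1 * (N : ℤ), k'.2 - n.2 * (N : ℤ))).re

lemma master (L M N : ℕ) (hM : 0 < M) (hN : 0 < N) (g : ℕ → ℤ × ℤ → ℍ)
    (hg : ∀ l < L, MemL2 (g l)) (hreal : ∀ l < L, IsRealValued (g l))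
    (h : ℤ × ℤ → ℍ) (S : Finset (ℤ × ℤ)) (hS : ∀ k ∉ S, h k = 0) :
    frameSum L M N g h = (M : ℝ) ^ 2 * ∑ k ∈ S, ∑ k' ∈ S,
      (if (M : ℤ) ∣ (k'.1 - k.1) ∧ (M : ℤ) ∣ (k'.2 - k.2)
       then Gr L N g k k' * (h k * star (h k')).re
       else 0) := by
  rw [frameSum]
  have hl : ∀ l ∈ Finset.range L,
      (∑' n : ℤ × ℤ, ∑ m ∈ msq M, ‖qpair (gaborAtom M N (g l) m n) h‖ ^ 2)
        = (M : ℝ) ^ 2 * ∑ k ∈ S, ∑ k' ∈ S,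
            (if (M : ℤ) ∣ (k'.1 - k.1) ∧ (M : ℤ) ∣ (k'.2 - k.2)
             then (∑' n : ℤ × ℤ,
                 (g l (k.1 - n.1 * (N : ℤ), k.2 - n.2 * (N : ℤ))).re
                   * (g l (k'.1 - n.1 * (N : ℤ), k'.2 - n.2 * (N : ℤ))).re)
               * (h k * star (h k')).re
             else 0) := by
    intro l hlmem
    have hlL := Finset.mem_range.mp hlmem
    rw [tsum_congr (fun n => key M N hM (g l) (hreal l hlL) h S hS n)]
    rw [tsum_mul_left]
    congr 1
    have hsum1 : ∀ k ∈ S, ∀ k' ∈ S, Summable (fun n : ℤ × ℤ =>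
        (if (M : ℤ) ∣ (k'.1 - k.1) ∧ (M : ℤ) ∣ (k'.2 - k.2)
         then ((g l (k.1 - n.1 * (N : ℤ), k.2 - n.2 * (N : ℤ))).re
                * (g l (k'.1 - n.1 * (N : ℤ), k'.2 - n.2 * (N : ℤ))).re)
              * (h k * star (h k')).re
         else 0)) := by
      intro k _ k' _
      by_cases hd : (M : ℤ) ∣ (k'.1 - k.1) ∧ (M : ℤ) ∣ (k'.2 - k.2)
      · simp only [if_pos hd]
        exact (prod_summable N hN (g l) (hg l hlL) (hreal l hlL) k k').mul_right _
      · simp only [if_neg hd]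
        exact summable_zero
    rw [Summable.tsum_finsetSum (fun k hk => summable_sum (fun k' hk' => hsum1 k hk k' hk'))]
    refine Finset.sum_congr rfl fun k hk => ?_
    rw [Summable.tsum_finsetSum (fun k' hk' => hsum1 k hk k' hk')]
    refine Finset.sum_congr rfl fun k' hk' => ?_
    by_cases hd : (M : ℤ) ∣ (k'.1 - k.1) ∧ (M : ℤ) ∣ (k'.2 - k.2)
    · simp only [if_pos hd]
      exact tsum_mul_right
    · simp only [if_neg hd, tsum_zero]
  rw [Finset.sum_congr rfl hl, ← Finset.mul_sum]
  congr 1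
  rw [Finset.sum_comm]
  refine Finset.sum_congr rfl fun k hk => ?_
  rw [Finset.sum_comm]
  refine Finset.sum_congr rfl fun k' hk' => ?_
  by_cases hd : (M : ℤ) ∣ (k'.1 - k.1) ∧ (M : ℤ) ∣ (k'.2 - k.2)
  · simp only [if_pos hd, ← Finset.sum_mul]
    rw [Gr]
  · simp only [if_neg hd, Finset.sum_const_zero]


lemma Gr_symm (L N : ℕ) (g : ℕ → ℤ × ℤ → ℍ) (k k' : ℤ × ℤ) :
    Gr L N g k k' = Gr L N g k' k := by
  unfold Gr
  refine Finset.sum_congr rfl fun l _ => tsum_congr fun n => mul_comm _ _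

lemma coe_sum {α : Type*} (s : Finset α) (f : α → ℝ) :
    ((∑ x ∈ s, f x : ℝ) : ℍ) = ∑ x ∈ s, ((f x : ℝ) : ℍ) := by
  classical
  induction s using Finset.induction with
  | empty => simp
  | insert a s hx ih => rw [Finset.sum_insert hx, Finset.sum_insert hx, Quaternion.coe_add, ih]

lemma gaborG_eq_coe_Gr (L M N : ℕ) (g : ℕ → ℤ × ℤ → ℍ)
    (hreal : ∀ l < L, IsRealValued (g l)) (k p : ℤ × ℤ) :
    gaborG L M N g k p
      = ((Gr L N g k (k.1 + p.1 * (M : ℤ), k.2 + p.2 * (M : ℤ)) : ℝ) : ℍ) := by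
  rw [gaborG, Gr, coe_sum]
  refine Finset.sum_congr rfl fun l hl => ?_
  have hlL := Finset.mem_range.mp hl
  rw [← Quaternion.tsum_coe]
  refine tsum_congr fun n => ?_
  conv_lhs => rw [hreal l hlL (k.1 - n.1 * (N : ℤ), k.2 - n.2 * (N : ℤ)),
    hreal l hlL (k.1 + p.1 * (M : ℤ) - n.1 * (N : ℤ), k.2 + p.2 * (M : ℤ) - n.2 * (N : ℤ))]
  rw [← Quaternion.coe_mul]

lemma Gr_shift (L N : ℕ) (g : ℕ → ℤ × ℤ → ℍ) (k k' q : ℤ × ℤ) :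
    Gr L N g (k.1 - q.1 * (N : ℤ), k.2 - q.2 * (N : ℤ))
        (k'.1 - q.1 * (N : ℤ), k'.2 - q.2 * (N : ℤ)) = Gr L N g k k' := by
  unfold Gr
  refine Finset.sum_congr rfl fun l _ => ?_
  rw [← (Equiv.addRight q).tsum_eq (fun n : ℤ × ℤ =>
    (g l (k.1 - n.1 * (N : ℤ), k.2 - n.2 * (N : ℤ))).re
      * (g l (k'.1 - n.1 * (N : ℤ), k'.2 - n.2 * (N : ℤ))).re)]
  refine tsum_congr fun n => ?_
  simp only [Equiv.coe_addRight, Prod.fst_add, Prod.snd_add]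
  congr 2 <;> [skip; skip] <;> first | (congr 1 <;> ring) | rfl

/-- finitely supported functions are in `ℓ²`. -/
lemma MemL2_of_finsupp (h : ℤ × ℤ → ℍ) (S : Finset (ℤ × ℤ)) (hS : ∀ k ∉ S, h k = 0) :
    MemL2 h :=
  summable_of_ne_finset_zero (s := S) fun b hb => by rw [hS b hb]; simp

lemma re_mul_star_self (x : ℍ) : (x * star x).re = ‖x‖ ^ 2 :=
  (norm_sq_eq_re_mul_star x).symm

lemma Gr_diag (L M N : ℕ) (hM : 0 < M) (hN : 0 < N) (g : ℕ → ℤ × ℤ → ℍ)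
    (hg : ∀ l < L, MemL2 (g l)) (hreal : ∀ l < L, IsRealValued (g l))
    (hpar : IsParseval L M N g) (j : ℤ × ℤ) :
    Gr L N g j j = (((M : ℝ) ^ 2))⁻¹ := by
  set h : ℤ × ℤ → ℍ := fun x => if x = j then 1 else 0 with hh
  have hS : ∀ k ∉ ({j} : Finset (ℤ × ℤ)), h k = 0 := by
    intro k hk
    simp only [Finset.mem_singleton] at hk
    simp [hh, hk]
  have hmem : MemL2 h := MemL2_of_finsupp h _ hS
  have h1 := hpar h hmem
  rw [master L M N hM hN g hg hreal h _ hS] at h1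
  have h2 : normSq2 h = 1 := by
    rw [normSq2, tsum_eq_sum (s := ({j} : Finset (ℤ × ℤ)))
      (fun k hk => by rw [hS k hk]; simp)]
    simp [hh]
  rw [h2] at h1
  simp only [Finset.sum_singleton] at h1
  rw [if_pos ⟨by simp, by simp⟩] at h1
  have h3 : (h j * star (h j)).re = 1 := by simp [hh]
  rw [h3, mul_one] at h1
  have hM2 : ((M : ℝ) ^ 2) ≠ 0 := by positivity
  field_simp at h1 ⊢
  linarith [h1]

lemma Gr_forward (L M N : ℕ) (hM : 0 < M) (hN : 0 < N) (g : ℕ → ℤ × ℤ → ℍ)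
    (hg : ∀ l < L, MemL2 (g l)) (hreal : ∀ l < L, IsRealValued (g l))
    (hpar : IsParseval L M N g) (k p : ℤ × ℤ) :
    Gr L N g k (k.1 + p.1 * (M : ℤ), k.2 + p.2 * (M : ℤ))
      = if p = (0 : ℤ × ℤ) then (((M : ℝ) ^ 2))⁻¹ else 0 := by
  by_cases hp : p = (0 : ℤ × ℤ)
  · subst hp
    simp only [Prod.fst_zero, Prod.snd_zero, zero_mul, add_zero, if_pos rfl]
    exact Gr_diag L M N hM hN g hg hreal hpar k
  · rw [if_neg hp]
    set k' : ℤ × ℤ := (k.1 + p.1 * (M : ℤ), k.2 + p.2 * (M : ℤ)) with hk'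
    have hM0 : (M : ℤ) ≠ 0 := by exact_mod_cast hM.ne'
    have hM2 : (0:ℝ) < (M : ℝ) ^ 2 := by positivity
    have hkk' : k ≠ k' := by
      intro he
      apply hp
      have h1 : k.1 = k'.1 := congrArg Prod.fst he
      have h2 : k.2 = k'.2 := congrArg Prod.snd he
      rw [hk'] at h1 h2
      simp only [] at h1 h2
      have e1 : p.1 * (M : ℤ) = 0 := by linarith
      have e2 : p.2 * (M : ℤ) = 0 := by linarith
      have f1 : p.1 = 0 := (mul_eq_zero.mp e1).resolve_right hM0
      have f2 : p.2 = 0 := (mul_eq_zero.mp e2).resolve_right hM0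
      exact Prod.ext f1 f2
    set h : ℤ × ℤ → ℍ := fun x => if x = k ∨ x = k' then 1 else 0 with hh
    have hS : ∀ x ∉ ({k, k'} : Finset (ℤ × ℤ)), h x = 0 := by
      intro x hx
      simp only [Finset.mem_insert, Finset.mem_singleton, not_or] at hx
      simp [hh, hx.1, hx.2]
    have hmem : MemL2 h := MemL2_of_finsupp h _ hS
    have h1 := hpar h hmem
    rw [master L M N hM hN g hg hreal h _ hS] at h1
    have hvk : h k = 1 := by simp [hh]
    have hvk' : h k' = 1 := by simp [hh]
    have h2 : normSq2 h = 2 := by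
      rw [normSq2, tsum_eq_sum (s := ({k, k'} : Finset (ℤ × ℤ)))
        (fun x hx => by rw [hS x hx]; simp)]
      rw [Finset.sum_pair hkk', hvk, hvk']
      norm_num
    rw [h2] at h1
    simp only [Finset.sum_pair hkk'] at h1
    have c0 : (M : ℤ) ∣ (k.1 - k.1) ∧ (M : ℤ) ∣ (k.2 - k.2) := by simp
    have c0' : (M : ℤ) ∣ (k'.1 - k.1) ∧ (M : ℤ) ∣ (k'.2 - k.2) := by
      constructor
      · exact ⟨p.1, by rw [hk']; simp; ring⟩
      · exact ⟨p.2, by rw [hk']; simp; ring⟩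
    have c0'' : (M : ℤ) ∣ (k.1 - k'.1) ∧ (M : ℤ) ∣ (k.2 - k'.2) := by
      constructor
      · exact ⟨-p.1, by rw [hk']; simp; ring⟩
      · exact ⟨-p.2, by rw [hk']; simp; ring⟩
    have c1 : (M : ℤ) ∣ (k'.1 - k'.1) ∧ (M : ℤ) ∣ (k'.2 - k'.2) := by simp
    rw [if_pos c0, if_pos c0', if_pos c0'', if_pos c1] at h1
    rw [hvk, hvk'] at h1
    simp only [star_one, mul_one, Quaternion.re_one] at h1
    rw [Gr_diag L M N hM hN g hg hreal hpar k, Gr_diag L M N hM hN g hg hreal hpar k',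
      Gr_symm L N g k' k] at h1
    have e : (M : ℝ) ^ 2 * ((M : ℝ) ^ 2)⁻¹ = 1 := mul_inv_cancel₀ hM2.ne'
    nlinarith [h1, e, hM2]


/-! ### Soft analysis: from finitely supported Parseval to full Parseval -/

open scoped RealInnerProductSpace

/-- truncation of a sequence to a finite set -/
def trunc (h : ℤ × ℤ → ℍ) (T : Finset (ℤ × ℤ)) : ℤ × ℤ → ℍ :=
  fun k => if k ∈ T then h k else 0

lemma trunc_spt (h : ℤ × ℤ → ℍ) (T : Finset (ℤ × ℤ)) : ∀ k ∉ T, trunc h T k = 0 := by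
  intro k hk
  simp [trunc, hk]

lemma MemL2_trunc (h : ℤ × ℤ → ℍ) (T : Finset (ℤ × ℤ)) : MemL2 (trunc h T) :=
  MemL2_of_finsupp _ T (trunc_spt h T)

lemma mul_le_half_sq (a b : ℝ) : a * b ≤ 1 / 2 * (a ^ 2 + b ^ 2) := by
  nlinarith [sq_nonneg (a - b)]

lemma norm_eI (θ : ℝ) : ‖eI θ‖ = 1 := by
  have h : ‖eI θ‖ ^ 2 = 1 := by
    rw [norm_sq_eq_re_mul_star, star_eI, eI_mul_eI]
    simp
  nlinarith [norm_nonneg (eI θ)]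

lemma norm_eJ (θ : ℝ) : ‖eJ θ‖ = 1 := by
  have h : ‖eJ θ‖ ^ 2 = 1 := by
    rw [norm_sq_eq_re_mul_star, star_eJ, eJ_mul_eJ]
    simp
  nlinarith [norm_nonneg (eJ θ)]

lemma norm_atom (M N : ℕ) (gl : ℤ × ℤ → ℍ) (m : ℕ × ℕ) (n k : ℤ × ℤ) :
    ‖gaborAtom M N gl m n k‖ = ‖gl (k.1 - n.1 * (N : ℤ), k.2 - n.2 * (N : ℤ))‖ := by
  rw [gaborAtom, norm_mul, norm_mul, norm_eI, norm_eJ]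
  ring

lemma inj_shift2 (N : ℕ) (n : ℤ × ℤ) :
    Function.Injective (fun k : ℤ × ℤ => (k.1 - n.1 * (N : ℤ), k.2 - n.2 * (N : ℤ))) := by
  intro a b hab
  rw [Prod.ext_iff] at hab
  obtain ⟨h1, h2⟩ := hab
  simp only [] at h1 h2
  have e1 : a.1 = b.1 := by omega
  have e2 : a.2 = b.2 := by omega
  exact Prod.ext e1 e2

lemma atom_term_summable (M N : ℕ) (gl : ℤ × ℤ → ℍ) (hmem : MemL2 gl)
    (h : ℤ × ℤ → ℍ) (hh : MemL2 h) (m : ℕ × ℕ) (n : ℤ × ℤ) :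
    Summable (fun k : ℤ × ℤ => star (gaborAtom M N gl m n k) * h k) := by
  have hgls : Summable (fun k : ℤ × ℤ =>
      ‖gl (k.1 - n.1 * (N : ℤ), k.2 - n.2 * (N : ℤ))‖ ^ 2) :=
    hmem.comp_injective (inj_shift2 N n)
  have hb : Summable (fun k : ℤ × ℤ =>
      1 / 2 * (‖gl (k.1 - n.1 * (N : ℤ), k.2 - n.2 * (N : ℤ))‖ ^ 2 + ‖h k‖ ^ 2)) :=
    (hgls.add hh).mul_left _
  apply Summable.of_norm_bounded hb
  intro k
  rw [norm_mul, norm_star, norm_atom]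
  exact mul_le_half_sq _ _

lemma qpair_trunc_eq_sum (f h : ℤ × ℤ → ℍ) (T : Finset (ℤ × ℤ)) :
    qpair f (trunc h T) = ∑ k ∈ T, star (f k) * h k := by
  rw [qpair]
  rw [tsum_eq_sum (s := T) (fun k hk => by simp [trunc, hk])]
  exact Finset.sum_congr rfl fun k hk => by simp [trunc, hk]

lemma qpair_tendsto (f h : ℤ × ℤ → ℍ)
    (hs : Summable (fun k : ℤ × ℤ => star (f k) * h k)) :
    Filter.Tendsto (fun T : Finset (ℤ × ℤ) => qpair f (trunc h T))
      Filter.atTop (nhds (qpair f h)) := by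
  have h1 : (fun T : Finset (ℤ × ℤ) => qpair f (trunc h T))
      = fun T : Finset (ℤ × ℤ) => ∑ k ∈ T, star (f k) * h k :=
    funext fun T => qpair_trunc_eq_sum f h T
  rw [h1, qpair]
  exact hs.hasSum


lemma normSq2_trunc_le (h : ℤ × ℤ → ℍ) (hmem : MemL2 h) (T : Finset (ℤ × ℤ)) :
    normSq2 (trunc h T) ≤ normSq2 h := by
  apply Summable.tsum_le_tsum _ (MemL2_trunc h T) hmem
  intro k
  by_cases hk : k ∈ T <;> simp [trunc, hk] <;> positivity

lemma fin_n_summable (L M N : ℕ) (hM : 0 < M) (hN : 0 < N) (g : ℕ → ℤ × ℤ → ℍ)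
    (hg : ∀ l < L, MemL2 (g l)) (hreal : ∀ l < L, IsRealValued (g l))
    (u : ℤ × ℤ → ℍ) (S : Finset (ℤ × ℤ)) (hu : ∀ k ∉ S, u k = 0)
    (l : ℕ) (hl : l < L) :
    Summable (fun n : ℤ × ℤ => ∑ m ∈ msq M, ‖qpair (gaborAtom M N (g l) m n) u‖ ^ 2) := by
  rw [show (fun n : ℤ × ℤ => ∑ m ∈ msq M, ‖qpair (gaborAtom M N (g l) m n) u‖ ^ 2)
      = fun n : ℤ × ℤ => (M : ℝ) ^ 2 * ∑ k ∈ S, ∑ k' ∈ S,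
          (if (M : ℤ) ∣ (k'.1 - k.1) ∧ (M : ℤ) ∣ (k'.2 - k.2)
           then ((g l (k.1 - n.1 * (N : ℤ), k.2 - n.2 * (N : ℤ))).re
                  * (g l (k'.1 - n.1 * (N : ℤ), k'.2 - n.2 * (N : ℤ))).re)
                * (u k * star (u k')).re
           else 0)
    from funext fun n => key M N hM (g l) (hreal l hl) u S hu n]
  apply Summable.mul_left
  apply summable_sum
  intro k _
  apply summable_sum
  intro k' _
  by_cases hd : (M : ℤ) ∣ (k'.1 - k.1) ∧ (M : ℤ) ∣ (k'.2 - k.2)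
  · simp only [if_pos hd]
    exact (prod_summable N hN (g l) (hg l hl) (hreal l hl) k k').mul_right _
  · simp only [if_neg hd]
    exact summable_zero

lemma bessel (L M N : ℕ) (hM : 0 < M) (hN : 0 < N) (g : ℕ → ℤ × ℤ → ℍ)
    (hg : ∀ l < L, MemL2 (g l)) (hreal : ∀ l < L, IsRealValued (g l))
    (hP : ∀ (u : ℤ × ℤ → ℍ) (S : Finset (ℤ × ℤ)), (∀ k ∉ S, u k = 0) →
      frameSum L M N g u = normSq2 u)
    (h : ℤ × ℤ → ℍ) (hmem : MemL2 h) :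
    (∀ l < L, Summable (fun n : ℤ × ℤ =>
        ∑ m ∈ msq M, ‖qpair (gaborAtom M N (g l) m n) h‖ ^ 2))
      ∧ frameSum L M N g h ≤ normSq2 h := by
  have hPB : ∀ F : Finset (ℤ × ℤ), (∑ l ∈ Finset.range L, ∑ n ∈ F,
      ∑ m ∈ msq M, ‖qpair (gaborAtom M N (g l) m n) h‖ ^ 2) ≤ normSq2 h := by
    intro F
    have hTend : Filter.Tendsto (fun T : Finset (ℤ × ℤ) =>
        ∑ l ∈ Finset.range L, ∑ n ∈ F, ∑ m ∈ msq M,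
          ‖qpair (gaborAtom M N (g l) m n) (trunc h T)‖ ^ 2) Filter.atTop
        (nhds (∑ l ∈ Finset.range L, ∑ n ∈ F, ∑ m ∈ msq M,
          ‖qpair (gaborAtom M N (g l) m n) h‖ ^ 2)) := by
      refine tendsto_finset_sum _ fun l hl => tendsto_finset_sum _ fun n _ =>
        tendsto_finset_sum _ fun m _ => ?_
      have hlL := Finset.mem_range.mp hl
      exact ((qpair_tendsto (gaborAtom M N (g l) m n) h
        (atom_term_summable M N (g l) (hg l hlL) h hmem m n)).norm).pow 2
    refine le_of_tendsto hTend (Filter.Eventually.of_forall fun T => ?_)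
    calc (∑ l ∈ Finset.range L, ∑ n ∈ F, ∑ m ∈ msq M,
        ‖qpair (gaborAtom M N (g l) m n) (trunc h T)‖ ^ 2)
        ≤ ∑ l ∈ Finset.range L, ∑' n : ℤ × ℤ, ∑ m ∈ msq M,
            ‖qpair (gaborAtom M N (g l) m n) (trunc h T)‖ ^ 2 := by
          refine Finset.sum_le_sum fun l hl => ?_
          exact Summable.sum_le_tsum F (fun n _ => by positivity)
            (fin_n_summable L M N hM hN g hg hreal (trunc h T) T (trunc_spt h T) l
              (Finset.mem_range.mp hl))
      _ = normSq2 (trunc h T) := hP (trunc h T) T (trunc_spt h T)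
      _ ≤ normSq2 h := normSq2_trunc_le h hmem T
  have hC : ∀ l < L, Summable (fun n : ℤ × ℤ =>
      ∑ m ∈ msq M, ‖qpair (gaborAtom M N (g l) m n) h‖ ^ 2) := by
    intro l hl
    apply summable_of_sum_le (fun n => by positivity)
    intro F
    calc (∑ n ∈ F, ∑ m ∈ msq M, ‖qpair (gaborAtom M N (g l) m n) h‖ ^ 2)
        ≤ ∑ l' ∈ Finset.range L, ∑ n ∈ F, ∑ m ∈ msq M,
            ‖qpair (gaborAtom M N (g l') m n) h‖ ^ 2 :=
          Finset.single_le_sum (f := fun l' => ∑ n ∈ F, ∑ m ∈ msq M,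
            ‖qpair (gaborAtom M N (g l') m n) h‖ ^ 2)
            (fun l' _ => by positivity) (Finset.mem_range.mpr hl)
      _ ≤ normSq2 h := hPB F
  refine ⟨hC, ?_⟩
  rw [frameSum, ← Summable.tsum_finsetSum (fun l hl => hC l (Finset.mem_range.mp hl))]
  apply Summable.tsum_le_of_sum_le (summable_sum (fun l hl => hC l (Finset.mem_range.mp hl)))
  intro F
  rw [Finset.sum_comm]
  exact hPB F


/-- frame-coefficient bilinear form -/
def Bform (L M N : ℕ) (g : ℕ → ℤ × ℤ → ℍ) (u φ : ℤ × ℤ → ℍ) : ℝ :=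
  ∑ l ∈ Finset.range L, ∑' n : ℤ × ℤ, ∑ m ∈ msq M,
    ⟪qpair (gaborAtom M N (g l) m n) u, qpair (gaborAtom M N (g l) m n) φ⟫

/-- pointwise inner product sum -/
def ip (u φ : ℤ × ℤ → ℍ) : ℝ := ∑' k : ℤ × ℤ, ⟪u k, φ k⟫

lemma inner_le_eps (ε : ℝ) (hε : 0 < ε) (a b : ℍ) :
    |⟪a, b⟫| ≤ 1 / 2 * (ε * ‖a‖ ^ 2 + ε⁻¹ * ‖b‖ ^ 2) := by
  have h1 := abs_real_inner_le_norm a b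
  have h2 := sq_nonneg (ε * ‖a‖ - ‖b‖)
  have h3 : ε * ε⁻¹ = 1 := mul_inv_cancel₀ hε.ne'
  have h4 : 0 ≤ ε⁻¹ := by positivity
  nlinarith [norm_nonneg a, norm_nonneg b, mul_pos hε hε]

lemma Bform_pt_bound (L M N : ℕ) (g : ℕ → ℤ × ℤ → ℍ) (u φ : ℤ × ℤ → ℍ)
    (ε : ℝ) (hε : 0 < ε) (l : ℕ) (n : ℤ × ℤ) :
    |∑ m ∈ msq M, ⟪qpair (gaborAtom M N (g l) m n) u, qpair (gaborAtom M N (g l) m n) φ⟫|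
      ≤ 1 / 2 * (ε * ∑ m ∈ msq M, ‖qpair (gaborAtom M N (g l) m n) u‖ ^ 2
          + ε⁻¹ * ∑ m ∈ msq M, ‖qpair (gaborAtom M N (g l) m n) φ‖ ^ 2) := by
  calc |∑ m ∈ msq M, ⟪qpair (gaborAtom M N (g l) m n) u, qpair (gaborAtom M N (g l) m n) φ⟫|
      ≤ ∑ m ∈ msq M,
          |⟪qpair (gaborAtom M N (g l) m n) u, qpair (gaborAtom M N (g l) m n) φ⟫| :=
        Finset.abs_sum_le_sum_abs _ _
    _ ≤ ∑ m ∈ msq M, 1 / 2 * (ε * ‖qpair (gaborAtom M N (g l) m n) u‖ ^ 2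
          + ε⁻¹ * ‖qpair (gaborAtom M N (g l) m n) φ‖ ^ 2) :=
        Finset.sum_le_sum fun m _ => inner_le_eps ε hε _ _
    _ = 1 / 2 * (ε * ∑ m ∈ msq M, ‖qpair (gaborAtom M N (g l) m n) u‖ ^ 2
          + ε⁻¹ * ∑ m ∈ msq M, ‖qpair (gaborAtom M N (g l) m n) φ‖ ^ 2) := by
        rw [Finset.mul_sum, Finset.mul_sum, ← Finset.sum_add_distrib, ← Finset.mul_sum]

lemma Bform_n_summable (L M N : ℕ) (g : ℕ → ℤ × ℤ → ℍ) (u φ : ℤ × ℤ → ℍ) (l : ℕ)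
    (Su : Summable (fun n : ℤ × ℤ => ∑ m ∈ msq M, ‖qpair (gaborAtom M N (g l) m n) u‖ ^ 2))
    (Sφ : Summable (fun n : ℤ × ℤ => ∑ m ∈ msq M, ‖qpair (gaborAtom M N (g l) m n) φ‖ ^ 2)) :
    Summable (fun n : ℤ × ℤ => ∑ m ∈ msq M,
      ⟪qpair (gaborAtom M N (g l) m n) u, qpair (gaborAtom M N (g l) m n) φ⟫) := by
  apply Summable.of_norm_bounded (((Su.mul_left 1).add (Sφ.mul_left 1)).mul_left (1 / 2))
  intro n
  rw [Real.norm_eq_abs]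
  simpa using Bform_pt_bound L M N g u φ 1 one_pos l n

lemma Bform_abs_le (L M N : ℕ) (g : ℕ → ℤ × ℤ → ℍ) (u φ : ℤ × ℤ → ℍ)
    (ε : ℝ) (hε : 0 < ε)
    (Su : ∀ l < L, Summable (fun n : ℤ × ℤ =>
      ∑ m ∈ msq M, ‖qpair (gaborAtom M N (g l) m n) u‖ ^ 2))
    (Sφ : ∀ l < L, Summable (fun n : ℤ × ℤ =>
      ∑ m ∈ msq M, ‖qpair (gaborAtom M N (g l) m n) φ‖ ^ 2)) :
    |Bform L M N g u φ| ≤ 1 / 2 * (ε * frameSum L M N g u + ε⁻¹ * frameSum L M N g φ) := by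
  rw [Bform, frameSum, frameSum]
  calc |∑ l ∈ Finset.range L, ∑' n : ℤ × ℤ, ∑ m ∈ msq M,
      ⟪qpair (gaborAtom M N (g l) m n) u, qpair (gaborAtom M N (g l) m n) φ⟫|
      ≤ ∑ l ∈ Finset.range L, |∑' n : ℤ × ℤ, ∑ m ∈ msq M,
          ⟪qpair (gaborAtom M N (g l) m n) u, qpair (gaborAtom M N (g l) m n) φ⟫| :=
        Finset.abs_sum_le_sum_abs _ _
    _ ≤ ∑ l ∈ Finset.range L, (1 / 2 * (ε * ∑' n : ℤ × ℤ,
          (∑ m ∈ msq M, ‖qpair (gaborAtom M N (g l) m n) u‖ ^ 2)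
          + ε⁻¹ * ∑' n : ℤ × ℤ,
          (∑ m ∈ msq M, ‖qpair (gaborAtom M N (g l) m n) φ‖ ^ 2))) := by
        refine Finset.sum_le_sum fun l hl => ?_
        have hlL := Finset.mem_range.mp hl
        have hB : Summable (fun n : ℤ × ℤ => 1 / 2 * (ε * ∑ m ∈ msq M,
            ‖qpair (gaborAtom M N (g l) m n) u‖ ^ 2 + ε⁻¹ * ∑ m ∈ msq M,
            ‖qpair (gaborAtom M N (g l) m n) φ‖ ^ 2)) :=
          ((((Su l hlL).mul_left ε)).add ((Sφ l hlL).mul_left ε⁻¹)).mul_left (1 / 2)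
        calc |∑' n : ℤ × ℤ, ∑ m ∈ msq M,
            ⟪qpair (gaborAtom M N (g l) m n) u, qpair (gaborAtom M N (g l) m n) φ⟫|
            ≤ ∑' n : ℤ × ℤ, |∑ m ∈ msq M,
                ⟪qpair (gaborAtom M N (g l) m n) u, qpair (gaborAtom M N (g l) m n) φ⟫| := by
              have hs : Summable (fun n : ℤ × ℤ => |∑ m ∈ msq M,
                  ⟪qpair (gaborAtom M N (g l) m n) u,
                    qpair (gaborAtom M N (g l) m n) φ⟫|) := by
                apply Summable.of_nonneg_of_le (fun n => abs_nonneg _)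
                  (fun n => Bform_pt_bound L M N g u φ ε hε l n) hB
              simpa [Real.norm_eq_abs] using
                norm_tsum_le_tsum_norm (f := fun n : ℤ × ℤ => ∑ m ∈ msq M,
                  ⟪qpair (gaborAtom M N (g l) m n) u, qpair (gaborAtom M N (g l) m n) φ⟫)
                  (by simpa [Real.norm_eq_abs] using hs)
          _ ≤ ∑' n : ℤ × ℤ, 1 / 2 * (ε * ∑ m ∈ msq M,
                ‖qpair (gaborAtom M N (g l) m n) u‖ ^ 2 + ε⁻¹ * ∑ m ∈ msq M,
                ‖qpair (gaborAtom M N (g l) m n) φ‖ ^ 2) := by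
              apply Summable.tsum_le_tsum (fun n => Bform_pt_bound L M N g u φ ε hε l n) _ hB
              apply Summable.of_nonneg_of_le (fun n => abs_nonneg _)
                (fun n => Bform_pt_bound L M N g u φ ε hε l n) hB
          _ = 1 / 2 * (ε * ∑' n : ℤ × ℤ,
                (∑ m ∈ msq M, ‖qpair (gaborAtom M N (g l) m n) u‖ ^ 2)
                + ε⁻¹ * ∑' n : ℤ × ℤ,
                (∑ m ∈ msq M, ‖qpair (gaborAtom M N (g l) m n) φ‖ ^ 2)) := by
              rw [tsum_mul_left, ← tsum_mul_left (a := ε), ← tsum_mul_left (a := ε⁻¹),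
                Summable.tsum_add (((Su l hlL).mul_left ε)) (((Sφ l hlL).mul_left ε⁻¹))]
    _ = 1 / 2 * (ε * ∑ l ∈ Finset.range L, ∑' n : ℤ × ℤ,
          (∑ m ∈ msq M, ‖qpair (gaborAtom M N (g l) m n) u‖ ^ 2)
          + ε⁻¹ * ∑ l ∈ Finset.range L, ∑' n : ℤ × ℤ,
          (∑ m ∈ msq M, ‖qpair (gaborAtom M N (g l) m n) φ‖ ^ 2)) := by
        rw [Finset.mul_sum, Finset.mul_sum, ← Finset.sum_add_distrib, ← Finset.mul_sum]


lemma qpair_add (f u v : ℤ × ℤ → ℍ)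
    (hu : Summable (fun k : ℤ × ℤ => star (f k) * u k))
    (hv : Summable (fun k : ℤ × ℤ => star (f k) * v k)) :
    qpair f (fun k => u k + v k) = qpair f u + qpair f v := by
  rw [qpair, qpair, qpair, ← Summable.tsum_add hu hv]
  exact tsum_congr fun k => mul_add _ _ _

lemma Bform_symm (L M N : ℕ) (g : ℕ → ℤ × ℤ → ℍ) (u φ : ℤ × ℤ → ℍ) :
    Bform L M N g u φ = Bform L M N g φ u := by
  rw [Bform, Bform]
  exact Finset.sum_congr rfl fun l _ => tsum_congr fun n =>
    Finset.sum_congr rfl fun m _ => real_inner_comm _ _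

lemma Bform_diag (L M N : ℕ) (g : ℕ → ℤ × ℤ → ℍ) (u : ℤ × ℤ → ℍ) :
    Bform L M N g u u = frameSum L M N g u := by
  rw [Bform, frameSum]
  exact Finset.sum_congr rfl fun l _ => tsum_congr fun n =>
    Finset.sum_congr rfl fun m _ => real_inner_self_eq_norm_sq _

lemma Bform_add_left (L M N : ℕ) (g : ℕ → ℤ × ℤ → ℍ) (hg : ∀ l < L, MemL2 (g l))
    (u v φ : ℤ × ℤ → ℍ) (humem : MemL2 u) (hvmem : MemL2 v)
    (Su : ∀ l < L, Summable (fun n : ℤ × ℤ =>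
      ∑ m ∈ msq M, ‖qpair (gaborAtom M N (g l) m n) u‖ ^ 2))
    (Sv : ∀ l < L, Summable (fun n : ℤ × ℤ =>
      ∑ m ∈ msq M, ‖qpair (gaborAtom M N (g l) m n) v‖ ^ 2))
    (Sφ : ∀ l < L, Summable (fun n : ℤ × ℤ =>
      ∑ m ∈ msq M, ‖qpair (gaborAtom M N (g l) m n) φ‖ ^ 2)) :
    Bform L M N g (fun k => u k + v k) φ = Bform L M N g u φ + Bform L M N g v φ := by
  rw [Bform, Bform, Bform, ← Finset.sum_add_distrib]
  refine Finset.sum_congr rfl fun l hl => ?_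
  have hlL := Finset.mem_range.mp hl
  rw [← Summable.tsum_add (Bform_n_summable L M N g u φ l (Su l hlL) (Sφ l hlL))
    (Bform_n_summable L M N g v φ l (Sv l hlL) (Sφ l hlL))]
  refine tsum_congr fun n => ?_
  rw [← Finset.sum_add_distrib]
  refine Finset.sum_congr rfl fun m _ => ?_
  rw [qpair_add (gaborAtom M N (g l) m n) u v
    (atom_term_summable M N (g l) (hg l hlL) u humem m n)
    (atom_term_summable M N (g l) (hg l hlL) v hvmem m n), inner_add_left]

lemma ip_fin (u φ : ℤ × ℤ → ℍ) (S : Finset (ℤ × ℤ)) (hφ : ∀ k ∉ S, φ k = 0) :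
    ip u φ = ∑ k ∈ S, ⟪u k, φ k⟫ := by
  rw [ip]
  exact tsum_eq_sum fun k hk => by rw [hφ k hk, inner_zero_right]

lemma normSq2_fin (u : ℤ × ℤ → ℍ) (S : Finset (ℤ × ℤ)) (hu : ∀ k ∉ S, u k = 0) :
    normSq2 u = ∑ k ∈ S, ‖u k‖ ^ 2 := by
  rw [normSq2]
  exact tsum_eq_sum fun k hk => by rw [hu k hk]; simp

lemma normSq2_add_fin (u φ : ℤ × ℤ → ℍ) (S : Finset (ℤ × ℤ))
    (hu : ∀ k ∉ S, u k = 0) (hφ : ∀ k ∉ S, φ k = 0) :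
    normSq2 (fun k => u k + φ k) = normSq2 u + normSq2 φ + 2 * ip u φ := by
  rw [normSq2_fin (fun k => u k + φ k) S (fun k hk => by
      show u k + φ k = 0
      rw [hu k hk, hφ k hk, add_zero]),
    normSq2_fin u S hu, normSq2_fin φ S hφ, ip_fin u φ S hφ]
  rw [Finset.sum_congr rfl fun k (_ : k ∈ S) => norm_add_sq_real (u k) (φ k)]
  rw [Finset.sum_add_distrib, Finset.sum_add_distrib, ← Finset.mul_sum]
  ring

lemma Bform_fin (L M N : ℕ) (hM : 0 < M) (hN : 0 < N) (g : ℕ → ℤ × ℤ → ℍ)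
    (hg : ∀ l < L, MemL2 (g l)) (hreal : ∀ l < L, IsRealValued (g l))
    (hP : ∀ (w : ℤ × ℤ → ℍ) (S : Finset (ℤ × ℤ)), (∀ k ∉ S, w k = 0) →
      frameSum L M N g w = normSq2 w)
    (u φ : ℤ × ℤ → ℍ) (Su' : Finset (ℤ × ℤ)) (hu0 : ∀ k ∉ Su', u k = 0)
    (Sφ' : Finset (ℤ × ℤ)) (hφ0 : ∀ k ∉ Sφ', φ k = 0) :
    Bform L M N g u φ = ip u φ := by
  set S : Finset (ℤ × ℤ) := Su' ∪ Sφ' with hS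
  have hu : ∀ k ∉ S, u k = 0 := fun k hk => hu0 k fun hm => hk (Finset.mem_union_left _ hm)
  have hφ : ∀ k ∉ S, φ k = 0 := fun k hk => hφ0 k fun hm => hk (Finset.mem_union_right _ hm)
  have haddv : ∀ k ∉ S, u k + φ k = 0 := fun k hk => by rw [hu k hk, hφ k hk, add_zero]
  have humem : MemL2 u := MemL2_of_finsupp u S hu
  have hφmem : MemL2 φ := MemL2_of_finsupp φ S hφ
  have SSu := fun l hl => fin_n_summable L M N hM hN g hg hreal u S hu l hl
  have SSφ := fun l hl => fin_n_summable L M N hM hN g hg hreal φ S hφ l hl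
  have h1 : Bform L M N g (fun k => u k + φ k) (fun k => u k + φ k)
      = Bform L M N g u u + Bform L M N g u φ + Bform L M N g φ u + Bform L M N g φ φ := by
    rw [Bform_add_left L M N g hg u φ (fun k => u k + φ k) humem hφmem SSu SSφ
      (fun l hl => fin_n_summable L M N hM hN g hg hreal _ S haddv l hl)]
    rw [Bform_symm L M N g u (fun k => u k + φ k),
      Bform_add_left L M N g hg u φ u humem hφmem SSu SSφ SSu,
      Bform_symm L M N g φ (fun k => u k + φ k),
      Bform_add_left L M N g hg u φ φ humem hφmem SSu SSφ SSφ]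
    ring
  rw [Bform_diag, Bform_diag, Bform_diag] at h1
  rw [hP (fun k => u k + φ k) S haddv, hP u S hu, hP φ S hφ] at h1
  rw [normSq2_add_fin u φ S hu hφ] at h1
  have h2 : Bform L M N g φ u = Bform L M N g u φ := Bform_symm L M N g φ u
  linarith [h1, h2]


lemma rest_eq (h : ℤ × ℤ → ℍ) (T : Finset (ℤ × ℤ)) (k : ℤ × ℤ) :
    h k - trunc h T k = if k ∈ T then 0 else h k := by
  by_cases hk : k ∈ T <;> simp [trunc, hk]

lemma MemL2_rest (h : ℤ × ℤ → ℍ) (hmem : MemL2 h) (T : Finset (ℤ × ℤ)) :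
    MemL2 (fun k => h k - trunc h T k) := by
  apply Summable.of_nonneg_of_le (fun k => by positivity) _ hmem
  intro k
  show ‖h k - trunc h T k‖ ^ 2 ≤ ‖h k‖ ^ 2
  rw [rest_eq]
  by_cases hk : k ∈ T <;> simp [hk] <;> positivity

lemma normSq2_rest (h : ℤ × ℤ → ℍ) (hmem : MemL2 h) (T : Finset (ℤ × ℤ)) :
    normSq2 (fun k => h k - trunc h T k) = normSq2 h - ∑ k ∈ T, ‖h k‖ ^ 2 := by
  have hpt : ∀ k : ℤ × ℤ, ‖h k‖ ^ 2
      = (if k ∈ T then ‖h k‖ ^ 2 else 0) + ‖h k - trunc h T k‖ ^ 2 := by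
    intro k
    rw [rest_eq]
    by_cases hk : k ∈ T <;> simp [hk]
  have hsum1 : Summable (fun k : ℤ × ℤ => if k ∈ T then ‖h k‖ ^ 2 else 0) :=
    summable_of_ne_finset_zero (s := T) (fun k hk => by simp [hk])
  have h2 : normSq2 h = (∑ k ∈ T, ‖h k‖ ^ 2) + normSq2 (fun k => h k - trunc h T k) := by
    rw [normSq2, tsum_congr hpt, Summable.tsum_add hsum1 (MemL2_rest h hmem T), normSq2]
    congr 1
    rw [tsum_eq_sum (s := T) (fun k hk => by simp [hk])]
    exact Finset.sum_congr rfl fun k hk => by simp [hk]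
  linarith

lemma Bform_eq_ip (L M N : ℕ) (hM : 0 < M) (hN : 0 < N) (g : ℕ → ℤ × ℤ → ℍ)
    (hg : ∀ l < L, MemL2 (g l)) (hreal : ∀ l < L, IsRealValued (g l))
    (hP : ∀ (w : ℤ × ℤ → ℍ) (S : Finset (ℤ × ℤ)), (∀ k ∉ S, w k = 0) →
      frameSum L M N g w = normSq2 w)
    (h : ℤ × ℤ → ℍ) (hmem : MemL2 h)
    (φ : ℤ × ℤ → ℍ) (Sφ : Finset (ℤ × ℤ)) (hφ0 : ∀ k ∉ Sφ, φ k = 0) :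
    Bform L M N g h φ = ip h φ := by
  obtain ⟨Sh, hFS⟩ := bessel L M N hM hN g hg hreal hP h hmem
  have hφmem : MemL2 φ := MemL2_of_finsupp φ Sφ hφ0
  have SSφ := fun l hl => fin_n_summable L M N hM hN g hg hreal φ Sφ hφ0 l hl
  have habs : ∀ δ > 0, |Bform L M N g h φ - ip h φ| ≤ δ := by
    intro δ hδ
    set C := normSq2 φ with hCdef
    have hC : 0 ≤ C := tsum_nonneg (fun k => by positivity)
    set ε : ℝ := δ / (C + 1) with hεdef
    have hεpos : 0 < ε := by positivity
    have htend : Filter.Tendsto (fun T : Finset (ℤ × ℤ) => ∑ k ∈ T, ‖h k‖ ^ 2)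
        Filter.atTop (nhds (normSq2 h)) := hmem.hasSum
    obtain ⟨T, hT1, hT2⟩ :=
      ((Metric.tendsto_nhds.mp htend (ε * δ) (by positivity)).and
        (Filter.eventually_ge_atTop Sφ)).exists
    set r : ℤ × ℤ → ℍ := fun k => h k - trunc h T k with hrdef
    have hrmem : MemL2 r := MemL2_rest h hmem T
    obtain ⟨Sr, hFSr⟩ := bessel L M N hM hN g hg hreal hP r hrmem
    have hnr : normSq2 r ≤ ε * δ := by
      rw [hrdef, normSq2_rest h hmem T]
      have := hT1
      rw [Real.dist_eq] at this
      have h1 := abs_lt.mp this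
      linarith [h1.1, h1.2]
    have hsplit : Bform L M N g h φ = Bform L M N g (trunc h T) φ + Bform L M N g r φ := by
      have heq : h = fun k => trunc h T k + r k := funext fun k => by simp [hrdef]
      calc Bform L M N g h φ = Bform L M N g (fun k => trunc h T k + r k) φ := by rw [← heq]
        _ = _ := Bform_add_left L M N g hg (trunc h T) r φ (MemL2_trunc h T) hrmem
            (fun l hl => fin_n_summable L M N hM hN g hg hreal (trunc h T) T
              (trunc_spt h T) l hl) Sr SSφ
    have htruncip : Bform L M N g (trunc h T) φ = ip h φ := by
      rw [Bform_fin L M N hM hN g hg hreal hP (trunc h T) φ T (trunc_spt h T) Sφ hφ0]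
      rw [ip_fin (trunc h T) φ Sφ hφ0, ip_fin h φ Sφ hφ0]
      refine Finset.sum_congr rfl fun k hk => ?_
      rw [show trunc h T k = h k from by simp [trunc, hT2 hk]]
    have h5 : |Bform L M N g r φ|
        ≤ 1 / 2 * (ε⁻¹ * frameSum L M N g r + (ε⁻¹)⁻¹ * frameSum L M N g φ) :=
      Bform_abs_le L M N g r φ ε⁻¹ (by positivity) Sr SSφ
    rw [inv_inv] at h5
    have hfr : frameSum L M N g r ≤ ε * δ := le_trans hFSr hnr
    have hfφ : frameSum L M N g φ = C := by rw [hP φ Sφ hφ0]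
    have hεinv : ε⁻¹ * (ε * δ) = δ := by
      field_simp
    have hεC : ε * C ≤ δ := by
      rw [hεdef, div_mul_eq_mul_div, div_le_iff₀ (by positivity : (0:ℝ) < C + 1)]
      nlinarith
    have h6 : |Bform L M N g h φ - ip h φ| = |Bform L M N g r φ| := by
      rw [hsplit, htruncip]
      ring_nf
    rw [h6]
    have h7 : ε⁻¹ * frameSum L M N g r ≤ δ := by
      calc ε⁻¹ * frameSum L M N g r ≤ ε⁻¹ * (ε * δ) := by
            apply mul_le_mul_of_nonneg_left hfr (by positivity)
        _ = δ := hεinv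
    have h8 : ε * frameSum L M N g φ ≤ δ := by rw [hfφ]; exact hεC
    linarith [h5, h7, h8]
  by_contra hne
  have hpos : 0 < |Bform L M N g h φ - ip h φ| := abs_pos.mpr (sub_ne_zero.mpr hne)
  have := habs (|Bform L M N g h φ - ip h φ| / 2) (by positivity)
  linarith

lemma parseval_of_fin (L M N : ℕ) (hM : 0 < M) (hN : 0 < N) (g : ℕ → ℤ × ℤ → ℍ)
    (hg : ∀ l < L, MemL2 (g l)) (hreal : ∀ l < L, IsRealValued (g l))
    (hP : ∀ (w : ℤ × ℤ → ℍ) (S : Finset (ℤ × ℤ)), (∀ k ∉ S, w k = 0) →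
      frameSum L M N g w = normSq2 w) :
    IsParseval L M N g := by
  intro h hmem
  obtain ⟨Sh, hFS⟩ := bessel L M N hM hN g hg hreal hP h hmem
  refine le_antisymm hFS ?_
  have hkey : ∀ T : Finset (ℤ × ℤ), ∑ k ∈ T, ‖h k‖ ^ 2
      ≤ 1 / 2 * (frameSum L M N g h + normSq2 h) := by
    intro T
    have h1 : Bform L M N g h (trunc h T) = ip h (trunc h T) :=
      Bform_eq_ip L M N hM hN g hg hreal hP h hmem (trunc h T) T (trunc_spt h T)
    have h2 : ip h (trunc h T) = ∑ k ∈ T, ‖h k‖ ^ 2 := by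
      rw [ip_fin h (trunc h T) T (trunc_spt h T)]
      refine Finset.sum_congr rfl fun k hk => ?_
      rw [show trunc h T k = h k from by simp [trunc, hk], real_inner_self_eq_norm_sq]
    have h3 : |Bform L M N g h (trunc h T)|
        ≤ 1 / 2 * (1 * frameSum L M N g h + 1⁻¹ * frameSum L M N g (trunc h T)) :=
      Bform_abs_le L M N g h (trunc h T) 1 one_pos Sh
        (fun l hl => fin_n_summable L M N hM hN g hg hreal (trunc h T) T (trunc_spt h T) l hl)
    have h4 : frameSum L M N g (trunc h T) ≤ normSq2 h := by
      rw [hP (trunc h T) T (trunc_spt h T)]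
      exact normSq2_trunc_le h hmem T
    have h5 := le_abs_self (Bform L M N g h (trunc h T))
    simp only [one_mul, inv_one] at h3
    linarith [h1, h2, h3, h4, h5]
  have hfin : normSq2 h ≤ 1 / 2 * (frameSum L M N g h + normSq2 h) :=
    le_of_tendsto hmem.hasSum (Filter.Eventually.of_forall hkey)
  linarith


lemma fin_parseval (L M N : ℕ) (hM : 0 < M) (hN : 0 < N) (g : ℕ → ℤ × ℤ → ℍ)
    (hg : ∀ l < L, MemL2 (g l)) (hreal : ∀ l < L, IsRealValued (g l))
    (hGr : ∀ k p : ℤ × ℤ, Gr L N g k (k.1 + p.1 * (M : ℤ), k.2 + p.2 * (M : ℤ))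
      = if p = (0 : ℤ × ℤ) then (((M : ℝ) ^ 2))⁻¹ else 0)
    (h : ℤ × ℤ → ℍ) (S : Finset (ℤ × ℤ)) (hS : ∀ k ∉ S, h k = 0) :
    frameSum L M N g h = normSq2 h := by
  rw [master L M N hM hN g hg hreal h S hS, normSq2_fin h S hS]
  have hrow : ∀ k ∈ S, (∑ k' ∈ S,
      (if (M : ℤ) ∣ (k'.1 - k.1) ∧ (M : ℤ) ∣ (k'.2 - k.2)
       then Gr L N g k k' * (h k * star (h k')).re
       else 0)) = (((M : ℝ) ^ 2))⁻¹ * ‖h k‖ ^ 2 := by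
    intro k hk
    rw [Finset.sum_eq_single_of_mem k hk ?off]
    · rw [if_pos ⟨by simp, by simp⟩]
      have hd : Gr L N g k k = (((M : ℝ) ^ 2))⁻¹ := by
        have h0 := hGr k 0
        simp only [Prod.fst_zero, Prod.snd_zero, zero_mul, add_zero, if_pos rfl] at h0
        exact h0
      rw [hd, re_mul_star_self]
    case off =>
      intro k' hk' hne
      by_cases hd : (M : ℤ) ∣ (k'.1 - k.1) ∧ (M : ℤ) ∣ (k'.2 - k.2)
      · rw [if_pos hd]
        obtain ⟨⟨p1, hp1⟩, ⟨p2, hp2⟩⟩ := hd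
        have hk1 : k'.1 = k.1 + p1 * (M : ℤ) := by linarith
        have hk2 : k'.2 = k.2 + p2 * (M : ℤ) := by linarith
        have hk'eq : k' = (k.1 + p1 * (M : ℤ), k.2 + p2 * (M : ℤ)) := by
          rw [← Prod.mk.eta (p := k'), hk1, hk2]
        have hp0 : ((p1, p2) : ℤ × ℤ) ≠ (0 : ℤ × ℤ) := by
          intro hp
          rw [Prod.ext_iff] at hp
          simp only [Prod.fst_zero, Prod.snd_zero] at hp
          apply hne
          rw [hk'eq, hp.1, hp.2]
          simp
        have hz := hGr k (p1, p2)
        rw [if_neg hp0] at hz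
        rw [hk'eq]
        simp only [] at hz
        rw [hz, zero_mul]
      · rw [if_neg hd]
  rw [Finset.sum_congr rfl hrow, ← Finset.mul_sum, ← mul_assoc,
    mul_inv_cancel₀ (by positivity : ((M : ℝ) ^ 2) ≠ 0), one_mul]

lemma Gr_cond_all (L M N : ℕ) (hM : 0 < M) (hN : 0 < N) (g : ℕ → ℤ × ℤ → ℍ)
    (hreal : ∀ l < L, IsRealValued (g l))
    (hcond : ∀ k : ℤ × ℤ, InNsq N k → ∀ p : ℤ × ℤ,
      gaborG L M N g k p = if p = 0 then (((M : ℍ)) ^ 2)⁻¹ else 0) :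
    ∀ k p : ℤ × ℤ, Gr L N g k (k.1 + p.1 * (M : ℤ), k.2 + p.2 * (M : ℤ))
      = if p = (0 : ℤ × ℤ) then (((M : ℝ) ^ 2))⁻¹ else 0 := by
  have hcast : (((M : ℍ)) ^ 2)⁻¹ = ((((M : ℝ) ^ 2)⁻¹ : ℝ) : ℍ) := by
    rw [Quaternion.coe_inv, Quaternion.coe_pow, Quaternion.coe_natCast]
  intro k p
  have hN0 : (0 : ℤ) < (N : ℤ) := by exact_mod_cast hN
  set q : ℤ × ℤ := (k.1 / (N : ℤ), k.2 / (N : ℤ)) with hq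
  set k0 : ℤ × ℤ := (k.1 % (N : ℤ), k.2 % (N : ℤ)) with hk0
  have hin : InNsq N k0 :=
    ⟨Int.emod_nonneg _ hN0.ne', Int.emod_lt_of_pos _ hN0,
      Int.emod_nonneg _ hN0.ne', Int.emod_lt_of_pos _ hN0⟩
  have e1 : k0.1 = k.1 - q.1 * (N : ℤ) := by
    simp only [hk0, hq, Int.emod_def]
    ring
  have e2 : k0.2 = k.2 - q.2 * (N : ℤ) := by
    simp only [hk0, hq, Int.emod_def]
    ring
  have hshift : Gr L N g k0 (k0.1 + p.1 * (M : ℤ), k0.2 + p.2 * (M : ℤ))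
      = Gr L N g k (k.1 + p.1 * (M : ℤ), k.2 + p.2 * (M : ℤ)) := by
    have e3 : (k0.1 + p.1 * (M : ℤ), k0.2 + p.2 * (M : ℤ))
        = ((k.1 + p.1 * (M : ℤ)) - q.1 * (N : ℤ), (k.2 + p.2 * (M : ℤ)) - q.2 * (N : ℤ)) :=
      Prod.ext (by rw [e1]; ring) (by rw [e2]; ring)
    have e4 : k0 = (k.1 - q.1 * (N : ℤ), k.2 - q.2 * (N : ℤ)) := Prod.ext e1 e2
    rw [e3, e4]
    exact Gr_shift L N g k (k.1 + p.1 * (M : ℤ), k.2 + p.2 * (M : ℤ)) q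
  have hG := hcond k0 hin p
  rw [gaborG_eq_coe_Gr L M N g hreal k0 p] at hG
  have hcoe : ((Gr L N g k0 (k0.1 + p.1 * (M : ℤ), k0.2 + p.2 * (M : ℤ)) : ℝ) : ℍ)
      = (((if p = (0 : ℤ × ℤ) then (((M : ℝ) ^ 2))⁻¹ else 0 : ℝ)) : ℍ) := by
    rw [hG]
    split_ifs
    · exact hcast
    · rw [Quaternion.coe_zero]
  have hreal' := Quaternion.coe_injective hcoe
  rw [← hshift, hreal']

end

/-- characterization of Parseval frames with real-valued windows. -/
theorem stmt_10 (L M N : ℕ) (hL : 0 < L) (hM : 0 < M) (hN : 0 < N)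
    (g : ℕ → ℤ × ℤ → ℍ) (hg : ∀ l < L, MemL2 (g l))
    (hreal : ∀ l < L, IsRealValued (g l)) :
    IsParseval L M N g ↔
      ∀ k : ℤ × ℤ, InNsq N k → ∀ p : ℤ × ℤ,
        gaborG L M N g k p =
          if p = 0 then (((M : ℍ)) ^ 2)⁻¹ else 0 := by
  have hcast : (((M : ℍ)) ^ 2)⁻¹ = ((((M : ℝ) ^ 2)⁻¹ : ℝ) : ℍ) := by
    rw [Quaternion.coe_inv, Quaternion.coe_pow, Quaternion.coe_natCast]
  constructor
  · intro hpar k _ p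
    rw [gaborG_eq_coe_Gr L M N g hreal k p,
      Gr_forward L M N hM hN g hg hreal hpar k p]
    split_ifs
    · exact hcast.symm
    · rw [Quaternion.coe_zero]
  · intro hcond
    have hGr := Gr_cond_all L M N hM hN g hreal hcond
    exact parseval_of_fin L M N hM hN g hg hreal
      (fun w S hS => fin_parseval L M N hM hN g hg hreal hGr w S hS)
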